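/- arXiv:1609.01684 — 2 statements merged into one kernel-verified Lean document; each statement's English description precedes it below -/
import Mathlib

section
/- There is no resonance sextuple (j1,...,j6) of integers with exactly five entries in S={-2,-1,1,2} and one entry outside S; i.e., for any j1,...,j5 ∈ S there is no k ∈ ℤ\S such that j1+j2+j3=j4+j5+k and j1²+j2²+j3²=j4²+j5²+k². -/
/-- Completeness of `S = {-2,-1,1,2}`: there is no resonance with five entries in `S`
and one entry outside `S`. -/
theorem no_resonance_five_in_S (j1 j2 j3 j4 j5 : ℤ)
    (h1 : j1 ∈ ({-2, -1, 1, 2} : Set ℤ)) (h2 : j2 ∈ ({-2, -1, 1, 2} : Set ℤ))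
    (h3 : j3 ∈ ({-2, -1, 1, 2} : Set ℤ)) (h4 : j4 ∈ ({-2, -1, 1, 2} : Set ℤ))
    (h5 : j5 ∈ ({-2, -1, 1, 2} : Set ℤ)) :
    ¬ ∃ k : ℤ, k ∉ ({-2, -1, 1, 2} : Set ℤ) ∧
      j1 + j2 + j3 = j4 + j5 + k ∧
      j1 ^ 2 + j2 ^ 2 + j3 ^ 2 = j4 ^ 2 + j5 ^ 2 + k ^ 2 := by
  rintro ⟨k, hk, hl, hs⟩
  obtain rfl : k = j1 + j2 + j3 - j4 - j5 := by omega
  simp only [Set.mem_insert_iff, Set.mem_singleton_iff, not_or] at h1 h2 h3 h4 h5 hk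
  rcases h1 with rfl | rfl | rfl | rfl <;>
  rcases h2 with rfl | rfl | rfl | rfl <;>
  rcases h3 with rfl | rfl | rfl | rfl <;>
  rcases h4 with rfl | rfl | rfl | rfl <;>
  rcases h5 with rfl | rfl | rfl | rfl <;>
  (revert hs hk; norm_num)
end

section
/- Let A: ℝ → M_n(ℂ) be continuous and T-periodic, and let X(t) be the fundamental matrix solution of ẋ = A(t)x with X(0) = I. If B is any complex matrix with e^{TB} = X(T), then P(t) := X(t) e^{-tB} is T-periodic and invertible, and the change of variables x = P(t)v conjugates ẋ = A(t)x to the constant-coefficient system v̇ = Bv. -/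
open Matrix

/-- Elementary bound: `‖M *ᵥ u‖ ≤ (∑ i, ∑ j, ‖M i j‖) * ‖u‖` for the sup norm on vectors. -/
lemma floquet_mulVec_bound {n : ℕ} (M : Matrix (Fin n) (Fin n) ℂ) (u : Fin n → ℂ) :
    ‖M *ᵥ u‖ ≤ (∑ i, ∑ j, ‖M i j‖) * ‖u‖ := by
  have hF : (0 : ℝ) ≤ ∑ i, ∑ j, ‖M i j‖ :=
    Finset.sum_nonneg fun i _ => Finset.sum_nonneg fun j _ => norm_nonneg _
  rw [pi_norm_le_iff_of_nonneg (mul_nonneg hF (norm_nonneg _))]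
  intro i
  have h1 : ‖(M *ᵥ u) i‖ ≤ ∑ j, ‖M i j‖ * ‖u‖ := by
    have hrw : (M *ᵥ u) i = ∑ j, M i j * u j := rfl
    rw [hrw]
    refine le_trans (norm_sum_le _ _) (Finset.sum_le_sum fun j _ => ?_)
    rw [norm_mul]
    exact mul_le_mul_of_nonneg_left (norm_le_pi_norm u j) (norm_nonneg _)
  refine h1.trans ?_
  rw [← Finset.sum_mul]
  refine mul_le_mul_of_nonneg_right ?_ (norm_nonneg _)
  exact Finset.single_le_sum (f := fun i => ∑ j, ‖M i j‖)
    (fun i _ => Finset.sum_nonneg fun j _ => norm_nonneg _) (Finset.mem_univ i)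

/-- Uniqueness for linear ODEs `x' = C t *ᵥ x` with continuous coefficients,
in both time directions. -/
lemma floquet_lin_unique {n : ℕ} (C : ℝ → Matrix (Fin n) (Fin n) ℂ)
    (hC : ∀ i j, Continuous fun t => C t i j)
    (f g : ℝ → Fin n → ℂ)
    (hf : ∀ t, HasDerivAt f (C t *ᵥ f t) t)
    (hg : ∀ t, HasDerivAt g (C t *ᵥ g t) t)
    {t₀ : ℝ} (h0 : f t₀ = g t₀) (t₁ : ℝ) : f t₁ = g t₁ := by
  set a : ℝ := min t₀ t₁ - 1 with ha
  set b : ℝ := max t₀ t₁ + 1 with hb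
  have hab : a < b := by
    have h1 : min t₀ t₁ ≤ max t₀ t₁ := (min_le_left _ _).trans (le_max_left _ _)
    simp only [ha, hb]; linarith
  have ht₀ : t₀ ∈ Set.Ioo a b := by
    constructor
    · have := min_le_left t₀ t₁; simp only [ha]; linarith
    · have := le_max_left t₀ t₁; simp only [hb]; linarith
  have ht₁ : t₁ ∈ Set.Icc a b := by
    constructor
    · have := min_le_right t₀ t₁; simp only [ha]; linarith
    · have := le_max_right t₀ t₁; simp only [hb]; linarith
  set cl : ℝ → ℝ := fun t => max a (min t b) with hcl
  have hclmem : ∀ t, cl t ∈ Set.Icc a b :=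
    fun t => ⟨le_max_left _ _, max_le hab.le (min_le_right _ _)⟩
  have hcleq : ∀ t ∈ Set.Icc a b, cl t = t := by
    intro t ht
    simp only [hcl]
    rw [min_eq_left ht.2, max_eq_right ht.1]
  set F : ℝ → ℝ := fun t => ∑ i, ∑ j, ‖C t i j‖ with hFdef
  have hFcont : Continuous F := by
    refine continuous_finset_sum _ fun i _ => continuous_finset_sum _ fun j _ => ?_
    exact (hC i j).norm
  obtain ⟨K₀, hK₀⟩ := isCompact_Icc.exists_bound_of_continuousOn
    (s := Set.Icc a b) hFcont.continuousOn
  have hFbound : ∀ t, F (cl t) ≤ K₀ := by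
    intro t
    have := hK₀ (cl t) (hclmem t)
    calc F (cl t) ≤ ‖F (cl t)‖ := le_abs_self _
      _ ≤ K₀ := this
  set K : NNReal := Real.toNNReal K₀ with hK
  set v : ℝ → (Fin n → ℂ) → (Fin n → ℂ) := fun t x => C (cl t) *ᵥ x with hv
  have hlip : ∀ t, LipschitzOnWith K (v t) Set.univ := by
    intro t
    refine LipschitzWith.lipschitzOnWith ?_
    refine LipschitzWith.of_dist_le_mul fun x y => ?_
    rw [dist_eq_norm, dist_eq_norm]
    have h1 : v t x - v t y = C (cl t) *ᵥ (x - y) := (Matrix.mulVec_sub _ _ _).symm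
    rw [h1]
    refine (floquet_mulVec_bound _ _).trans ?_
    refine mul_le_mul_of_nonneg_right ?_ (norm_nonneg _)
    refine (hFbound t).trans ?_
    rw [hK, Real.coe_toNNReal']
    exact le_max_left _ _
  have heq := ODE_solution_unique_of_mem_Icc (v := v) (s := fun _ => Set.univ) (fun t _ => hlip t) ht₀
    (fun t _ => (hf t).continuousAt.continuousWithinAt)
    (fun t ht => by
      have h1 : cl t = t := hcleq t (Set.mem_Icc_of_Ioo ht)
      simpa [hv, h1] using hf t)
    (fun _ _ => trivial)
    (fun t _ => (hg t).continuousAt.continuousWithinAt)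
    (fun t ht => by
      have h1 : cl t = t := hcleq t (Set.mem_Icc_of_Ioo ht)
      simpa [hv, h1] using hg t)
    (fun _ _ => trivial) h0
  exact heq ht₁

/-- Derivative of `t ↦ exp(tB) *ᵥ c`. -/
lemma floquet_exp_mulVec_deriv {n : ℕ} (B : Matrix (Fin n) (Fin n) ℂ) (c : Fin n → ℂ) (t : ℝ) :
    HasDerivAt (fun s : ℝ => NormedSpace.exp (s • B) *ᵥ c)
      ((B * NormedSpace.exp (t • B)) *ᵥ c) t := by
  letI : SeminormedRing (Matrix (Fin n) (Fin n) ℂ) := Matrix.linftyOpSemiNormedRing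
  letI : NormedRing (Matrix (Fin n) (Fin n) ℂ) := Matrix.linftyOpNormedRing
  letI : NormedAlgebra ℝ (Matrix (Fin n) (Fin n) ℂ) := Matrix.linftyOpNormedAlgebra
  have h : HasDerivAt (fun u : ℝ => NormedSpace.exp (u • B))
      (B * NormedSpace.exp (t • B)) t := hasDerivAt_exp_smul_const' B t
  let Lfun : Matrix (Fin n) (Fin n) ℂ →ₗ[ℝ] (Fin n → ℂ) :=
    { toFun := fun M => M *ᵥ c
      map_add' := fun M N => Matrix.add_mulVec M N c
      map_smul' := fun r M => Matrix.smul_mulVec r M c }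
  have hL : ∀ M : Matrix (Fin n) (Fin n) ℂ, ‖Lfun M‖ ≤ ‖c‖ * ‖M‖ := fun M =>
    (Matrix.linfty_opNorm_mulVec M c).trans_eq (mul_comm _ _)
  let L : Matrix (Fin n) (Fin n) ℂ →L[ℝ] (Fin n → ℂ) := Lfun.mkContinuous ‖c‖ hL
  have hcomp := L.hasFDerivAt.comp_hasDerivAt t h
  exact hcomp

/-- `exp(aB) * exp(bB) = exp((a+b)B)`. -/
lemma floquet_exp_smul_add {n : ℕ} (B : Matrix (Fin n) (Fin n) ℂ) (a b : ℝ) :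
    NormedSpace.exp (a • B) * NormedSpace.exp (b • B)
      = NormedSpace.exp ((a + b) • B) := by
  rw [add_smul]
  exact (Matrix.exp_add_of_commute _ _ (((Commute.refl B).smul_left a).smul_right b)).symm

/-- Floquet's theorem: if `A` is continuous and `T`-periodic, `X` is the fundamental
matrix solution of `ẋ = A(t)x` with `X(0) = 1`, and `e^{TB} = X(T)`, then
`P(t) := X(t)e^{-tB}` is `T`-periodic and invertible, and the change of variables
`x = P(t)v` conjugates `ẋ = A(t)x` to the constant-coefficient system `v̇ = Bv`. -/
theorem floquet (n : ℕ) (T : ℝ) (hT : 0 < T)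
    (A : ℝ → Matrix (Fin n) (Fin n) ℂ)
    (hAcont : ∀ i j, Continuous fun t => A t i j)
    (hAper : ∀ t, A (t + T) = A t)
    (X : ℝ → Matrix (Fin n) (Fin n) ℂ)
    (hX0 : X 0 = 1)
    (hX : ∀ t, ∀ i j, HasDerivAt (fun s => X s i j) ((A t * X t) i j) t)
    (B : Matrix (Fin n) (Fin n) ℂ)
    (hB : NormedSpace.exp (T • B) = X T)
    (P : ℝ → Matrix (Fin n) (Fin n) ℂ)
    (hP : ∀ t, P t = X t * NormedSpace.exp (-(t • B))) :
    (∀ t, P (t + T) = P t) ∧ (∀ t, IsUnit (P t)) ∧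
    (∀ x : ℝ → Fin n → ℂ,
      (∀ t, HasDerivAt x ((A t).mulVec (x t)) t) →
      ∀ v : ℝ → Fin n → ℂ, (∀ t, x t = (P t).mulVec (v t)) →
      ∀ t, HasDerivAt v (B.mulVec (v t)) t) := by
  -- columns of X solve the ODE
  have hXcol : ∀ (c : Fin n → ℂ) (t : ℝ),
      HasDerivAt (fun s => X s *ᵥ c) (A t *ᵥ (X t *ᵥ c)) t := by
    intro c t
    rw [hasDerivAt_pi]
    intro i
    have h : HasDerivAt (fun s => ∑ j, X s i j * c j) (∑ j, (A t * X t) i j * c j) t :=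
      HasDerivAt.fun_sum fun j _ => (hX t i j).mul_const (c j)
    have h1 : (fun s => (X s *ᵥ c) i) = fun s => ∑ j, X s i j * c j := by
      funext s; simp [Matrix.mulVec, dotProduct]
    have h2 : (A t *ᵥ (X t *ᵥ c)) i = ∑ j, (A t * X t) i j * c j := by
      rw [Matrix.mulVec_mulVec]; simp [Matrix.mulVec, dotProduct]
    rw [h1, h2]
    exact h
  have hzero : ∀ t : ℝ, HasDerivAt (fun _ : ℝ => (0 : Fin n → ℂ))
      (A t *ᵥ (0 : Fin n → ℂ)) t := by
    intro t
    simpa [Matrix.mulVec_zero] using hasDerivAt_const t (0 : Fin n → ℂ)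
  -- X t is invertible
  have hXunit : ∀ t, IsUnit (X t) := by
    intro t
    rw [← Matrix.mulVec_injective_iff_isUnit]
    intro u w huw
    have hd : ∀ s, HasDerivAt (fun r => X r *ᵥ (u - w)) (A s *ᵥ (X s *ᵥ (u - w))) s := hXcol _
    have h0 : (fun r => X r *ᵥ (u - w)) t = (fun _ : ℝ => (0 : Fin n → ℂ)) t := by
      simp only [Matrix.mulVec_sub]
      simp [huw]
    have heq := floquet_lin_unique A hAcont _ _ hd hzero h0 0
    simp only [hX0, Matrix.one_mulVec] at heq
    exact sub_eq_zero.mp heq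
  -- X (t + T) = X t * X T
  have hXper : ∀ t, X (t + T) = X t * X T := by
    intro t
    have key : ∀ c : Fin n → ℂ, X (t + T) *ᵥ c = (X t * X T) *ᵥ c := by
      intro c
      have hf : ∀ s : ℝ, HasDerivAt (fun r => X (r + T) *ᵥ c)
          (A s *ᵥ (X (s + T) *ᵥ c)) s := by
        intro s
        have h1 := hXcol c (s + T)
        have h2 : HasDerivAt (fun r : ℝ => r + T) 1 s := (hasDerivAt_id s).add_const T
        have h3 := h1.scomp s h2
        rw [one_smul] at h3
        rw [← hAper s]
        exact h3
      have hg : ∀ s : ℝ, HasDerivAt (fun r => X r *ᵥ (X T *ᵥ c))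
          (A s *ᵥ (X s *ᵥ (X T *ᵥ c))) s := hXcol _
      have h00 : (fun r => X (r + T) *ᵥ c) 0 = (fun r => X r *ᵥ (X T *ᵥ c)) 0 := by
        simp [hX0, Matrix.one_mulVec]
      have := floquet_lin_unique A hAcont _ _ hf hg h00 t
      simpa [Matrix.mulVec_mulVec] using this
    ext i j
    have := congrFun (key (Pi.single j 1)) i
    simpa [Matrix.mulVec_single] using this
  -- periodicity of P
  have hPper : ∀ t, P (t + T) = P t := by
    intro t
    rw [hP, hP, hXper t, ← hB, mul_assoc]
    congr 1
    simp only [← neg_smul]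
    rw [floquet_exp_smul_add]
    congr 1
    ring_nf
  -- invertibility of P
  have hPunit : ∀ t, IsUnit (P t) := by
    intro t
    rw [hP]
    exact (hXunit t).mul (Matrix.isUnit_exp _)
  refine ⟨hPper, hPunit, ?_⟩
  intro x hx v hv t₀
  set c : Fin n → ℂ := NormedSpace.exp (-(t₀ • B)) *ᵥ v t₀ with hc
  have hz : ∀ s, HasDerivAt (fun r => X r *ᵥ c) (A s *ᵥ (X s *ᵥ c)) s := hXcol c
  have hz0 : (fun r => X r *ᵥ c) t₀ = x t₀ := by
    rw [hv t₀, hP t₀]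
    simp [hc, Matrix.mulVec_mulVec]
  have hzx : ∀ s, X s *ᵥ c = x s :=
    fun s => floquet_lin_unique A hAcont _ _ hz hx hz0 s
  have hvf : ∀ s, v s = NormedSpace.exp (s • B) *ᵥ c := by
    intro s
    have h1 : X s *ᵥ (NormedSpace.exp (-(s • B)) *ᵥ v s) = X s *ᵥ c := by
      rw [Matrix.mulVec_mulVec, ← hP s, ← hv s, hzx s]
    have h2 := Matrix.mulVec_injective_iff_isUnit.mpr (hXunit s) h1
    have h3 : NormedSpace.exp (s • B) *ᵥ (NormedSpace.exp (-(s • B)) *ᵥ v s)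
        = NormedSpace.exp (s • B) *ᵥ c := by rw [h2]
    rw [Matrix.mulVec_mulVec] at h3
    have h4 : NormedSpace.exp (s • B) * NormedSpace.exp (-(s • B)) = 1 := by
      simp only [← neg_smul]
      rw [floquet_exp_smul_add]
      simp
    rw [h4, Matrix.one_mulVec] at h3
    exact h3
  have hveq : v = fun s => NormedSpace.exp (s • B) *ᵥ c := funext hvf
  rw [hveq]
  have hd := floquet_exp_mulVec_deriv B c t₀
  simpa [Matrix.mulVec_mulVec] using hd
end
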